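/- Let f satisfy (H1), c > 0, and let v : ℝ → ℝ be a C² solution of v'' + c·v' + f(v) = 0 with v → 0 at -∞ and v → 1 at +∞. Then there is no point ξ ∈ ℝ with v'(ξ) = 0 and s₀ ≤ v(ξ) < 1. -/

import Mathlib

open Filter Set

theorem stmt_5 (f : ℝ → ℝ) (s₀ c : ℝ) (v : ℝ → ℝ)
    (hf : Continuous f) (hs₀ : 0 < s₀) (hs₀1 : s₀ < 1)
    (hf0 : f 0 = 0) (hfs₀ : f s₀ = 0) (hf1 : f 1 = 0)
    (hneg : ∀ s, (s ∈ Ioo 0 s₀ ∨ s ∈ Ioi 1) → f s < 0)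
    (hpos : ∀ s, (s ∈ Iio 0 ∨ s ∈ Ioo s₀ 1) → 0 < f s)
    (hF : ∀ r, 0 < r → r ≤ 1 → (∫ s in (0:ℝ)..r, f s) < 0)
    (hc : 0 < c)
    (hv : ContDiff ℝ 2 v)
    (hode : ∀ z, deriv (deriv v) z + c * deriv v z + f (v z) = 0)
    (hbot : Tendsto v atBot (nhds 0)) (htop : Tendsto v atTop (nhds 1)) :
    ¬ ∃ ξ : ℝ, deriv v ξ = 0 ∧ s₀ ≤ v ξ ∧ v ξ < 1 := by
  rintro ⟨ξ, hξ', hξ₁, hξ₂⟩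
  set F : ℝ → ℝ := fun r => ∫ s in (0:ℝ)..r, f s with hFdef
  have hFder : ∀ r, HasDerivAt F (f r) r := fun r =>
    intervalIntegral.integral_hasDerivAt_right (hf.intervalIntegrable _ _)
      (hf.stronglyMeasurableAtFilter _ _) hf.continuousAt
  have hv1 : Differentiable ℝ v := hv.differentiable (by norm_num)
  have hv2 : Differentiable ℝ (deriv v) := by
    have h := (contDiff_succ_iff_deriv.mp
      (show ContDiff ℝ ((1 : ℕ) + 1) v by exact_mod_cast hv)).2
    exact h.2.differentiable (by norm_num)
  set V : ℝ → ℝ := fun z => deriv v z * deriv v z / 2 + F (v z) with hVdef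
  have hVder : ∀ z, HasDerivAt V (-(c * (deriv v z * deriv v z))) z := by
    intro z
    have h1 : HasDerivAt (deriv v) (deriv (deriv v) z) z := (hv2 z).hasDerivAt
    have h2 : HasDerivAt v (deriv v z) z := (hv1 z).hasDerivAt
    have h3 := ((h1.mul h1).div_const 2).add ((hFder (v z)).comp z h2)
    refine h3.congr_deriv (Eq.symm ?_)
    linear_combination (-(deriv v z)) * hode z
  have hVanti : Antitone V := by
    apply antitone_of_deriv_nonpos
    · exact fun z => (hVder z).differentiableAt
    · intro z
      rw [(hVder z).deriv]
      nlinarith [mul_self_nonneg (deriv v z)]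
  have hle : ∀ z, ξ ≤ z → F (v z) ≤ F (v ξ) := by
    intro z hz
    have h1 : V z ≤ V ξ := hVanti hz
    simp only [hVdef, hξ'] at h1
    nlinarith [mul_self_nonneg (deriv v z)]
  have htend : Tendsto (fun z => F (v z)) atTop (nhds (F 1)) :=
    (hFder 1).continuousAt.tendsto.comp htop
  have hF1le : F 1 ≤ F (v ξ) := le_of_tendsto htend (eventually_atTop.2 ⟨ξ, hle⟩)
  have hsplit : F (v ξ) + (∫ s in (v ξ)..1, f s) = F 1 := by
    simp only [hFdef]
    exact intervalIntegral.integral_add_adjacent_intervals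
      (hf.intervalIntegrable _ _) (hf.intervalIntegrable _ _)
  have hpos' : 0 < ∫ s in (v ξ)..1, f s := by
    apply intervalIntegral.intervalIntegral_pos_of_pos_on (hf.intervalIntegrable _ _)
    · intro x hx
      exact hpos x (Or.inr ⟨lt_of_le_of_lt hξ₁ hx.1, hx.2⟩)
    · exact hξ₂
  linarith
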